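/- arXiv:2309.13031 — 5 statements merged into one kernel-verified Lean document; each statement's English description precedes it below -/
import Mathlib

section
/- For q, r, v, σ > 0 and q - c > 0, the density p_s(x) = k₀ exp(-2r x^v/(v σ²)) x^(2(q-c)/σ²) solves the stationary Fokker-Planck equation d/dx[(q x - r x^(v+1) - c x + σ² x) p_s(x)] = (σ²/2) d²/dx²[x² p_s(x)] for all x > 0. -/
open Real Set

lemma fp_density_hasDerivAt (r v σ B k₀ : ℝ) (hv : 0 < v) (hσ : 0 < σ)
    {z : ℝ} (hz : 0 < z) :
    HasDerivAt (fun y : ℝ => k₀ * Real.exp (-(2 * r * y ^ v) / (v * σ ^ 2)) * y ^ B)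
      ((k₀ * Real.exp (-(2 * r * z ^ v) / (v * σ ^ 2)) * z ^ B) *
        (B / z - (2 * r / σ ^ 2) * z ^ (v - 1))) z := by
  have hz0 : z ≠ 0 := ne_of_gt hz
  have hv0 : v ≠ 0 := ne_of_gt hv
  have hσ0 : σ ≠ 0 := ne_of_gt hσ
  have h1 : HasDerivAt (fun y : ℝ => y ^ v) (v * z ^ (v - 1)) z :=
    Real.hasDerivAt_rpow_const (Or.inl hz0)
  have hfun : (fun y : ℝ => -(2 * r * y ^ v) / (v * σ ^ 2)) =
      fun y : ℝ => (-(2 * r) / (v * σ ^ 2)) * y ^ v := by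
    funext y; ring
  have h2 : HasDerivAt (fun y : ℝ => -(2 * r * y ^ v) / (v * σ ^ 2))
      ((-(2 * r) / (v * σ ^ 2)) * (v * z ^ (v - 1))) z := by
    rw [hfun]; exact h1.const_mul _
  have h3 := h2.exp
  have h4 : HasDerivAt (fun y : ℝ => y ^ B) (B * z ^ (B - 1)) z :=
    Real.hasDerivAt_rpow_const (Or.inl hz0)
  have h5 : HasDerivAt (fun y : ℝ => k₀ * Real.exp (-(2 * r * y ^ v) / (v * σ ^ 2)) * y ^ B) _ z :=
    (h3.const_mul k₀).mul h4
  convert h5 using 1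
  have e1 : z ^ (B - 1) = z ^ B / z := by
    rw [Real.rpow_sub hz, Real.rpow_one]
  rw [e1]
  field_simp
  ring

theorem stationary_fokker_planck (q r v c σ k₀ : ℝ)
    (hq : 0 < q) (hr : 0 < r) (hv : 0 < v) (hσ : 0 < σ) (hqc : 0 < q - c) (hk₀ : 0 < k₀) :
    ∀ x : ℝ, 0 < x →
      deriv (fun y : ℝ => (q * y - r * y ^ (v + 1) - c * y + σ ^ 2 * y) *
        (k₀ * Real.exp (-(2 * r * y ^ v) / (v * σ ^ 2)) * y ^ (2 * (q - c) / σ ^ 2))) x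
      = (σ ^ 2 / 2) *
        deriv (deriv (fun y : ℝ => y ^ 2 *
          (k₀ * Real.exp (-(2 * r * y ^ v) / (v * σ ^ 2)) * y ^ (2 * (q - c) / σ ^ 2)))) x := by
  intro x hx
  have hσ2 : (0:ℝ) < σ ^ 2 := by positivity
  have hσ0 : σ ≠ 0 := ne_of_gt hσ
  -- first derivative of y^2 * p y equals (2/σ^2) * (f y * p y) on Ioi 0
  have key : ∀ z : ℝ, 0 < z →
      deriv (fun y : ℝ => y ^ 2 *
          (k₀ * Real.exp (-(2 * r * y ^ v) / (v * σ ^ 2)) * y ^ (2 * (q - c) / σ ^ 2))) z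
      = (2 / σ ^ 2) * ((q * z - r * z ^ (v + 1) - c * z + σ ^ 2 * z) *
          (k₀ * Real.exp (-(2 * r * z ^ v) / (v * σ ^ 2)) * z ^ (2 * (q - c) / σ ^ 2))) := by
    intro z hz
    have hz0 : z ≠ 0 := ne_of_gt hz
    have hp := fp_density_hasDerivAt r v σ (2 * (q - c) / σ ^ 2) k₀ hv hσ hz
    have hpow : HasDerivAt (fun y : ℝ => y ^ 2) ((2:ℕ) * z ^ 1) z := by
      simpa using hasDerivAt_pow 2 z
    have h : HasDerivAt (fun y : ℝ => y ^ 2 *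
        (k₀ * Real.exp (-(2 * r * y ^ v) / (v * σ ^ 2)) * y ^ (2 * (q - c) / σ ^ 2))) _ z :=
      hpow.mul hp
    rw [h.deriv]
    have e2 : z ^ (v + 1) = z ^ (v - 1) * z ^ 2 := by
      rw [← Real.rpow_natCast z 2, ← Real.rpow_add hz]
      congr 1
      ring
    rw [e2]
    set E := Real.exp (-(2 * r * z ^ v) / (v * σ ^ 2))
    set P := z ^ (2 * (q - c) / σ ^ 2)
    field_simp
    ring
  have hEq : deriv (fun y : ℝ => y ^ 2 *
        (k₀ * Real.exp (-(2 * r * y ^ v) / (v * σ ^ 2)) * y ^ (2 * (q - c) / σ ^ 2)))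
      =ᶠ[nhds x] fun z : ℝ => (2 / σ ^ 2) * ((q * z - r * z ^ (v + 1) - c * z + σ ^ 2 * z) *
        (k₀ * Real.exp (-(2 * r * z ^ v) / (v * σ ^ 2)) * z ^ (2 * (q - c) / σ ^ 2))) := by
    filter_upwards [Ioi_mem_nhds hx] with z hz using key z hz
  rw [hEq.deriv_eq, deriv_const_mul_field, ← mul_assoc]
  have h1 : σ ^ 2 / 2 * (2 / σ ^ 2) = 1 := by field_simp
  rw [h1, one_mul]
end

section
/- For q, r, v, σ > 0 and q - c > 0, the stationary probability flow J(x) = (q x - r x^(v+1) - c x + σ² x) p_s(x) - (σ²/2) d/dx[x² p_s(x)] vanishes identically on (0, ∞) when p_s(x) = k₀ exp(-2r x^v/(v σ²)) x^(2(q-c)/σ²). -/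
open Real Set

theorem stationary_flow_vanishes (q r v c σ k₀ : ℝ)
    (hq : 0 < q) (hr : 0 < r) (hv : 0 < v) (hσ : 0 < σ) (hqc : 0 < q - c) (hk₀ : 0 < k₀) :
    ∀ x : ℝ, 0 < x →
      (q * x - r * x ^ (v + 1) - c * x + σ ^ 2 * x) *
        (k₀ * Real.exp (-(2 * r * x ^ v) / (v * σ ^ 2)) * x ^ (2 * (q - c) / σ ^ 2)) -
      (σ ^ 2 / 2) *
        deriv (fun y : ℝ => y ^ 2 *
          (k₀ * Real.exp (-(2 * r * y ^ v) / (v * σ ^ 2)) * y ^ (2 * (q - c) / σ ^ 2))) x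
      = 0 := by
  intro x hx
  have hx0 : x ≠ 0 := hx.ne'
  have hpow_v : HasDerivAt (fun y : ℝ => y ^ v) (v * x ^ (v - 1)) x :=
    Real.hasDerivAt_rpow_const (Or.inl hx0)
  have hu : HasDerivAt (fun y : ℝ => -(2 * r * y ^ v) / (v * σ ^ 2))
      (-(2 * r * (v * x ^ (v - 1))) / (v * σ ^ 2)) x := by
    have := ((hpow_v.const_mul (2 * r)).neg).div_const (v * σ ^ 2)
    simpa [mul_comm, mul_assoc, neg_div] using this
  have hexp : HasDerivAt (fun y : ℝ => Real.exp (-(2 * r * y ^ v) / (v * σ ^ 2)))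
      (Real.exp (-(2 * r * x ^ v) / (v * σ ^ 2)) * (-(2 * r * (v * x ^ (v - 1))) / (v * σ ^ 2))) x :=
    hu.exp
  have hpow_A : HasDerivAt (fun y : ℝ => y ^ (2 * (q - c) / σ ^ 2))
      ((2 * (q - c) / σ ^ 2) * x ^ (2 * (q - c) / σ ^ 2 - 1)) x :=
    Real.hasDerivAt_rpow_const (Or.inl hx0)
  have hprod := (hexp.const_mul k₀).mul hpow_A
  have hsq : HasDerivAt (fun y : ℝ => y ^ 2) (2 * x) x := by
    simpa using hasDerivAt_pow 2 x
  have hf : HasDerivAt (fun y : ℝ => y ^ 2 *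
      (k₀ * Real.exp (-(2 * r * y ^ v) / (v * σ ^ 2)) * y ^ (2 * (q - c) / σ ^ 2))) _ x := hsq.mul hprod
  rw [hf.deriv]
  have h1 : x ^ (v + 1) = x ^ v * x := by
    rw [Real.rpow_add hx, Real.rpow_one]
  have h2 : x ^ (2 * (q - c) / σ ^ 2 - 1) = x ^ (2 * (q - c) / σ ^ 2) / x := by
    rw [Real.rpow_sub hx, Real.rpow_one]
  have h3 : x ^ (v - 1) = x ^ v / x := by
    rw [Real.rpow_sub hx, Real.rpow_one]
  rw [h1, h2, h3]
  field_simp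
  ring
end

section
/- The upper incomplete gamma function satisfies Γ(s, x) / (x^(s-1) e^(-x)) → 1 as x → ∞, for any fixed real s. -/
open Real Set Filter MeasureTheory Topology

lemma exp_integral_Ioi (x : ℝ) {b : ℝ} (hb : 0 < b) :
    (∫ t in Ioi x, Real.exp (-b * t)) = Real.exp (-b * x) / b := by
  have h := MeasureTheory.integral_Ioi_of_hasDerivAt_of_tendsto
      (f := fun t => -Real.exp (-b * t) / b) (f' := fun t => Real.exp (-b * t))
      (a := x) (m := 0) ?_ ?_ (exp_neg_integrableOn_Ioi x hb) ?_
  · rw [h]; ring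
  · exact (((continuous_const.mul continuous_id).rexp.neg.div_const b).continuousWithinAt)
  · intro t _
    have : HasDerivAt (fun t => -Real.exp (-b * t) / b) (-(Real.exp (-b * t) * (-b * 1)) / b) t :=
      (((hasDerivAt_id t).const_mul (-b)).exp.neg).div_const b
    convert this using 1
    · rfl
    · rfl
    rw [eq_div_iff hb.ne']; ring
  · have : Tendsto (fun t : ℝ => -Real.exp (-b * t) / b) atTop (𝓝 ((-(0:ℝ)) / b)) := by
      refine Tendsto.div_const (Tendsto.neg ?_) _
      exact Real.tendsto_exp_atBot.comp (tendsto_id.const_mul_atTop_of_neg (by linarith))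
    simpa using this

theorem incomplete_gamma_asymptotic (s : ℝ) :
    Tendsto
      (fun x : ℝ =>
        (∫ t in Ioi x, t ^ (s - 1) * Real.exp (-t)) / (x ^ (s - 1) * Real.exp (-x)))
      atTop (nhds 1) := by
  set c := |s - 1| with hc
  have hc0 : 0 ≤ c := abs_nonneg _
  have h0 : Tendsto (fun x : ℝ => c / x) atTop (𝓝 0) :=
    tendsto_const_nhds.div_atTop tendsto_id
  have hlo : Tendsto (fun x : ℝ => (1 + c / x)⁻¹) atTop (𝓝 1) := by
    have := ((tendsto_const_nhds.add h0).inv₀ (by norm_num : (1:ℝ) + 0 ≠ 0))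
    simpa using this
  have hhi : Tendsto (fun x : ℝ => (1 - c / x)⁻¹) atTop (𝓝 1) := by
    have := ((tendsto_const_nhds.sub h0).inv₀ (by norm_num : (1:ℝ) - 0 ≠ 0))
    simpa using this
  refine tendsto_of_tendsto_of_tendsto_of_le_of_le' hlo hhi ?_ ?_ <;>
    · filter_upwards [eventually_ge_atTop (c + 1)] with x hx
      have hx0 : (0:ℝ) < x := by linarith
      have hε0 : 0 ≤ c / x := div_nonneg hc0 hx0.le
      have hε1 : c / x < 1 := (div_lt_one hx0).2 (by linarith)
      have hA : 0 < x ^ (s - 1) := rpow_pos_of_pos hx0 _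
      have hD : 0 < x ^ (s - 1) * Real.exp (-x) := mul_pos hA (exp_pos _)
      -- pointwise bounds
      have key : ∀ t ∈ Ioi x,
          x ^ (s - 1) * Real.exp c * Real.exp (-(1 + c / x) * t) ≤ t ^ (s - 1) * Real.exp (-t) ∧
          t ^ (s - 1) * Real.exp (-t) ≤ x ^ (s - 1) * Real.exp (-c) * Real.exp (-(1 - c / x) * t) := by
        intro t ht
        have htx : x < t := ht
        have ht0 : 0 < t := hx0.trans htx
        have hL0 : 0 ≤ Real.log t - Real.log x :=
          sub_nonneg.2 (Real.log_le_log hx0 htx.le)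
        have hL1 : Real.log t - Real.log x ≤ (t - x) / x := by
          rw [← Real.log_div ht0.ne' hx0.ne']
          have := Real.log_le_sub_one_of_pos (div_pos ht0 hx0)
          have h2 : t / x - 1 = (t - x) / x := by field_simp
          linarith [h2 ▸ this]
        have habs : |(s - 1) * (Real.log t - Real.log x)| ≤ c / x * (t - x) := by
          rw [abs_mul, abs_of_nonneg hL0]
          calc |s - 1| * (Real.log t - Real.log x) ≤ |s - 1| * ((t - x) / x) :=
                mul_le_mul_of_nonneg_left hL1 (abs_nonneg _)
            _ = c / x * (t - x) := by rw [← hc]; ring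
        obtain ⟨hb1, hb2⟩ := abs_le.1 habs
        have heq : t ^ (s - 1) * Real.exp (-t)
            = x ^ (s - 1) * Real.exp ((s - 1) * (Real.log t - Real.log x) - t) := by
          rw [Real.rpow_def_of_pos ht0, Real.rpow_def_of_pos hx0, ← Real.exp_add, ← Real.exp_add]
          congr 1; ring
        have hcx : c / x * x = c := by field_simp
        constructor
        · rw [heq, mul_assoc, ← Real.exp_add]
          refine mul_le_mul_of_nonneg_left (Real.exp_le_exp.2 ?_) hA.le
          linarith [hb1, hcx]
        · rw [heq, mul_assoc, ← Real.exp_add]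
          refine mul_le_mul_of_nonneg_left (Real.exp_le_exp.2 ?_) hA.le
          linarith [hb2, hcx]
      -- integrability
      have hint_hi : IntegrableOn
          (fun t => x ^ (s - 1) * Real.exp (-c) * Real.exp (-(1 - c / x) * t)) (Ioi x) :=
        (exp_neg_integrableOn_Ioi x (by linarith)).const_mul _
      have hint_lo : IntegrableOn
          (fun t => x ^ (s - 1) * Real.exp c * Real.exp (-(1 + c / x) * t)) (Ioi x) :=
        (exp_neg_integrableOn_Ioi x (by linarith)).const_mul _
      have hmeas : AEStronglyMeasurable (fun t : ℝ => t ^ (s - 1) * Real.exp (-t))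
          (volume.restrict (Ioi x)) := by
        apply Measurable.aestronglyMeasurable
        exact (measurable_id.pow_const _).mul (Real.measurable_exp.comp measurable_neg) |>.mono
          le_rfl le_rfl |>.mono le_rfl le_rfl
      have hint_mid : IntegrableOn (fun t : ℝ => t ^ (s - 1) * Real.exp (-t)) (Ioi x) := by
        refine hint_hi.mono' hmeas ?_
        refine (ae_restrict_iff' measurableSet_Ioi).2 (ae_of_all _ fun t ht => ?_)
        have ht0 : 0 < t := hx0.trans ht
        rw [Real.norm_eq_abs, abs_of_nonneg (by positivity)]
        exact (key t ht).2
      -- integral bounds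
      have hIlo : x ^ (s - 1) * Real.exp (-x) / (1 + c / x)
          ≤ ∫ t in Ioi x, t ^ (s - 1) * Real.exp (-t) := by
        have := setIntegral_mono_on hint_lo hint_mid measurableSet_Ioi
          (fun t ht => (key t ht).1)
        rw [MeasureTheory.integral_const_mul, exp_integral_Ioi x (by linarith : (0:ℝ) < 1 + c / x)]
          at this
        have hcx : Real.exp c * Real.exp (-(1 + c / x) * x) = Real.exp (-x) := by
          rw [← Real.exp_add]; congr 1; field_simp; try ring
        have e2 : x ^ (s - 1) * Real.exp c * (Real.exp (-(1 + c / x) * x) / (1 + c / x))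
            = x ^ (s - 1) * Real.exp (-x) / (1 + c / x) := by
          rw [← hcx]; ring
        linarith [this, e2]
      have hIhi : (∫ t in Ioi x, t ^ (s - 1) * Real.exp (-t))
          ≤ x ^ (s - 1) * Real.exp (-x) / (1 - c / x) := by
        have := setIntegral_mono_on hint_mid hint_hi measurableSet_Ioi
          (fun t ht => (key t ht).2)
        rw [MeasureTheory.integral_const_mul, exp_integral_Ioi x (by linarith : (0:ℝ) < 1 - c / x)]
          at this
        have hcx : Real.exp (-c) * Real.exp (-(1 - c / x) * x) = Real.exp (-x) := by
          rw [← Real.exp_add]; congr 1; field_simp; try ring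
        have e2 : x ^ (s - 1) * Real.exp (-c) * (Real.exp (-(1 - c / x) * x) / (1 - c / x))
            = x ^ (s - 1) * Real.exp (-x) / (1 - c / x) := by
          rw [← hcx]; ring
        linarith [this, e2]
      first
        | · rw [le_div_iff₀ hD]
            calc (1 + c / x)⁻¹ * (x ^ (s - 1) * Real.exp (-x))
                = x ^ (s - 1) * Real.exp (-x) / (1 + c / x) := by ring
              _ ≤ _ := hIlo
        | · rw [div_le_iff₀ hD]
            calc (∫ t in Ioi x, t ^ (s - 1) * Real.exp (-t))
                ≤ x ^ (s - 1) * Real.exp (-x) / (1 - c / x) := hIhi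
              _ = (1 - c / x)⁻¹ * (x ^ (s - 1) * Real.exp (-x)) := by ring
end

section
/- For q, r, v, σ > 0 and q - c > 0, the Feller quantity N(0) = ∫₀¹ [∫_η¹ S'(ξ) dξ] m(η) dη is infinite, where S' and m are the scale and speed densities of the diffusion with drift b(z) = (q - r z^v - c + σ²) z and diffusion coefficient a(z) = σ² z². In particular N(0) ≥ ∫₀¹ (η^(-1) - 1) dη = ∞. -/
open Real Set MeasureTheory

theorem feller_N_zero_infinite (q r v c σ : ℝ)
    (hq : 0 < q) (hr : 0 < r) (hv : 0 < v) (hσ : 0 < σ) (hqc : 0 < q - c)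
    (S' m : ℝ → ℝ)
    (hS' : ∀ ξ : ℝ, 0 < ξ →
      S' ξ = Real.exp (-(2 * ∫ z in (1:ℝ)..ξ, (q - r * z ^ v - c + σ ^ 2) / (σ ^ 2 * z))))
    (hm : ∀ η : ℝ, 0 < η →
      m η = (σ * η) ^ (-2 : ℝ) *
        Real.exp (2 * ∫ z in (1:ℝ)..η, (q - r * z ^ v - c + σ ^ 2) / (σ ^ 2 * z))) :
    ∫⁻ η in Ioo (0:ℝ) 1, ENNReal.ofReal ((∫ ξ in η..(1:ℝ), S' ξ) * m η) = ⊤ := by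
  have hσ2 : (0:ℝ) < σ ^ 2 := by positivity
  set A : ℝ := (q - c + σ ^ 2) / σ ^ 2 with hA
  set B : ℝ := r / (σ ^ 2 * v) with hB
  have hA1 : 1 < A := by
    rw [hA, lt_div_iff₀ hσ2]; linarith
  have hBpos : 0 < B := by rw [hB]; positivity
  -- Evaluate the inner antiderivative integral
  have heval : ∀ x : ℝ, 0 < x →
      (∫ z in (1:ℝ)..x, (q - r * z ^ v - c + σ ^ 2) / (σ ^ 2 * z))
        = A * Real.log x - B * (x ^ v - 1) := by
    intro x hx
    have hpos : ∀ z ∈ Set.uIcc (1:ℝ) x, 0 < z := fun z hz =>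
      lt_of_lt_of_le (lt_min one_pos hx) hz.1
    have hderiv : ∀ t ∈ Set.uIcc (1:ℝ) x,
        HasDerivAt (fun t : ℝ => A * Real.log t - B * t ^ v)
          ((q - r * t ^ v - c + σ ^ 2) / (σ ^ 2 * t)) t := by
      intro t ht
      have htpos := hpos t ht
      have h1 : HasDerivAt (fun t : ℝ => A * Real.log t - B * t ^ v)
          (A * t⁻¹ - B * (v * t ^ (v - 1))) t :=
        ((Real.hasDerivAt_log htpos.ne').const_mul A).sub
          ((Real.hasDerivAt_rpow_const (Or.inl htpos.ne')).const_mul B)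
      have heq : A * t⁻¹ - B * (v * t ^ (v - 1))
          = (q - r * t ^ v - c + σ ^ 2) / (σ ^ 2 * t) := by
        rw [Real.rpow_sub htpos, Real.rpow_one, hA, hB]
        field_simp
        ring
      rwa [heq] at h1
    have hcont : ContinuousOn (fun z : ℝ => (q - r * z ^ v - c + σ ^ 2) / (σ ^ 2 * z))
        (Set.uIcc (1:ℝ) x) := by
      apply ContinuousOn.div
      · have h1 : ContinuousOn (fun z : ℝ => z ^ v) (Set.uIcc (1:ℝ) x) :=
          continuousOn_id.rpow_const fun z hz => Or.inl (hpos z hz).ne'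
        exact ((continuousOn_const.sub (continuousOn_const.mul h1)).sub
          continuousOn_const).add continuousOn_const
      · exact continuousOn_const.mul continuousOn_id
      · intro z hz
        exact mul_ne_zero hσ2.ne' (hpos z hz).ne'
    rw [intervalIntegral.integral_eq_sub_of_hasDerivAt hderiv
      (hcont.intervalIntegrable)]
    simp [Real.rpow_one]
    ring
  -- Closed form of S' on positive reals
  have hS'eq : ∀ ξ : ℝ, 0 < ξ →
      S' ξ = ξ ^ (-(2 * A)) * Real.exp (2 * B * (ξ ^ v - 1)) := by
    intro ξ hξ
    rw [hS' ξ hξ, heval ξ hξ, Real.rpow_def_of_pos hξ (-(2 * A)), ← Real.exp_add, Real.exp_eq_exp]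
    ring
  -- Lower bound on m
  have hmge : ∀ η ∈ Ioo (0:ℝ) 1, σ ^ (-2:ℝ) * η ^ (2 * A - 2) ≤ m η := by
    intro η hη
    obtain ⟨hη0, hη1⟩ := hη
    have hexp : Real.exp (2 * (A * Real.log η - B * (η ^ v - 1)))
        = η ^ (2 * A) * Real.exp (2 * B * (1 - η ^ v)) := by
      rw [Real.rpow_def_of_pos hη0 (2 * A), ← Real.exp_add, Real.exp_eq_exp]; ring
    have hmeq : m η = σ ^ (-2:ℝ) * η ^ (2 * A - 2) * Real.exp (2 * B * (1 - η ^ v)) := by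
      rw [hm η hη0, heval η hη0, Real.mul_rpow hσ.le hη0.le, hexp,
        show (2 * A - 2 : ℝ) = -2 + 2 * A by ring, Real.rpow_add hη0]
      ring
    rw [hmeq]
    have h1 : (1:ℝ) ≤ Real.exp (2 * B * (1 - η ^ v)) := by
      apply Real.one_le_exp
      have : η ^ v ≤ 1 := Real.rpow_le_one hη0.le hη1.le hv.le
      nlinarith
    have hp : (0:ℝ) < σ ^ (-2:ℝ) * η ^ (2 * A - 2) :=
      mul_pos (Real.rpow_pos_of_pos hσ _) (Real.rpow_pos_of_pos hη0 _)
    exact le_mul_of_one_le_right hp.le h1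
  -- Lower bound on the inner integral
  have hSint : ∀ η ∈ Ioo (0:ℝ) 1,
      Real.exp (-(2 * B)) * ((η ^ (1 - 2 * A) - 1) / (2 * A - 1))
        ≤ ∫ ξ in η..(1:ℝ), S' ξ := by
    intro η hη
    obtain ⟨hη0, hη1⟩ := hη
    have hpos : ∀ ξ ∈ Set.uIcc η (1:ℝ), 0 < ξ := fun ξ hξ =>
      lt_of_lt_of_le (lt_min hη0 one_pos) hξ.1
    have hcongr : (∫ ξ in η..(1:ℝ), S' ξ)
        = ∫ ξ in η..(1:ℝ), ξ ^ (-(2 * A)) * Real.exp (2 * B * (ξ ^ v - 1)) :=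
      intervalIntegral.integral_congr fun ξ hξ => hS'eq ξ (hpos ξ hξ)
    have hcont1 : ContinuousOn (fun ξ : ℝ => ξ ^ (-(2 * A))) (Set.uIcc η 1) :=
      continuousOn_id.rpow_const fun ξ hξ => Or.inl (hpos ξ hξ).ne'
    have hcont2 : ContinuousOn (fun ξ : ℝ => ξ ^ (-(2 * A)) * Real.exp (2 * B * (ξ ^ v - 1)))
        (Set.uIcc η 1) := by
      apply hcont1.mul
      apply Real.continuous_exp.comp_continuousOn
      apply ContinuousOn.mul continuousOn_const
      exact (continuousOn_id.rpow_const fun ξ hξ => Or.inl (hpos ξ hξ).ne').sub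
        continuousOn_const
    have hmono : (∫ ξ in η..(1:ℝ), Real.exp (-(2 * B)) * ξ ^ (-(2 * A)))
        ≤ ∫ ξ in η..(1:ℝ), ξ ^ (-(2 * A)) * Real.exp (2 * B * (ξ ^ v - 1)) := by
      apply intervalIntegral.integral_mono_on hη1.le
        ((continuousOn_const.mul hcont1).intervalIntegrable)
        (hcont2.intervalIntegrable)
      intro ξ hξ
      have hξ0 : 0 < ξ := lt_of_lt_of_le hη0 hξ.1
      rw [mul_comm]
      apply mul_le_mul_of_nonneg_left _ (Real.rpow_nonneg hξ0.le _)
      apply Real.exp_le_exp.mpr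
      have : (0:ℝ) ≤ ξ ^ v := Real.rpow_nonneg hξ0.le v
      nlinarith
    have hval : (∫ ξ in η..(1:ℝ), ξ ^ (-(2 * A)))
        = (η ^ (1 - 2 * A) - 1) / (2 * A - 1) := by
      rw [integral_rpow (Or.inr ⟨by intro h; nlinarith [h], fun h =>
        absurd (hpos 0 h) (lt_irrefl 0)⟩)]
      rw [Real.one_rpow, show (-(2 * A) + 1 : ℝ) = 1 - 2 * A by ring]
      have h21 : (2 * A - 1 : ℝ) ≠ 0 := by intro h; nlinarith [h]
      have h12 : (1 - 2 * A : ℝ) ≠ 0 := by intro h; nlinarith [h]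
      field_simp
      ring
    calc Real.exp (-(2 * B)) * ((η ^ (1 - 2 * A) - 1) / (2 * A - 1))
        = ∫ ξ in η..(1:ℝ), Real.exp (-(2 * B)) * ξ ^ (-(2 * A)) := by
          rw [intervalIntegral.integral_const_mul, hval]
      _ ≤ ∫ ξ in η..(1:ℝ), ξ ^ (-(2 * A)) * Real.exp (2 * B * (ξ ^ v - 1)) := hmono
      _ = ∫ ξ in η..(1:ℝ), S' ξ := hcongr.symm
  -- The constant
  set C : ℝ := Real.exp (-(2 * B)) * σ ^ (-2:ℝ) / (2 * A - 1) with hC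
  have hCpos : 0 < C := by
    rw [hC]
    exact div_pos (mul_pos (Real.exp_pos _) (Real.rpow_pos_of_pos hσ _)) (by linarith)
  -- Pointwise product lower bound
  have key : ∀ η ∈ Ioo (0:ℝ) 1,
      C * (η⁻¹ - 1) ≤ (∫ ξ in η..(1:ℝ), S' ξ) * m η := by
    intro η hη
    obtain ⟨hη0, hη1⟩ := hη
    have hL1 : (0:ℝ) ≤ Real.exp (-(2 * B)) * ((η ^ (1 - 2 * A) - 1) / (2 * A - 1)) := by
      have h1 : (1:ℝ) ≤ η ^ (1 - 2 * A) :=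
        Real.one_le_rpow_of_pos_of_le_one_of_nonpos hη0 hη1.le (by linarith)
      have h2 : (0:ℝ) < 2 * A - 1 := by linarith
      exact mul_nonneg (Real.exp_pos _).le (div_nonneg (by linarith) h2.le)
    have hL2 : (0:ℝ) ≤ σ ^ (-2:ℝ) * η ^ (2 * A - 2) := by positivity
    have hprod : (Real.exp (-(2 * B)) * ((η ^ (1 - 2 * A) - 1) / (2 * A - 1)))
          * (σ ^ (-2:ℝ) * η ^ (2 * A - 2))
        ≤ (∫ ξ in η..(1:ℝ), S' ξ) * m η :=
      mul_le_mul (hSint η ⟨hη0, hη1⟩) (hmge η ⟨hη0, hη1⟩) hL2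
        (le_trans hL1 (hSint η ⟨hη0, hη1⟩))
    refine le_trans ?_ hprod
    have hmul : η ^ (1 - 2 * A) * η ^ (2 * A - 2) = η⁻¹ := by
      rw [← Real.rpow_add hη0, show (1 - 2 * A + (2 * A - 2) : ℝ) = -1 by ring,
        Real.rpow_neg_one]
    have hle1 : η ^ (2 * A - 2) ≤ 1 :=
      Real.rpow_le_one hη0.le hη1.le (by linarith)
    have hexpand : (Real.exp (-(2 * B)) * ((η ^ (1 - 2 * A) - 1) / (2 * A - 1)))
          * (σ ^ (-2:ℝ) * η ^ (2 * A - 2))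
        = C * (η⁻¹ - η ^ (2 * A - 2)) := by
      rw [hC, ← hmul]
      have h21 : (2 * A - 1 : ℝ) ≠ 0 := by intro h; nlinarith [h]
      field_simp
    rw [hexpand]
    have : η⁻¹ - 1 ≤ η⁻¹ - η ^ (2 * A - 2) := by linarith
    nlinarith
  -- The lower-bound function has infinite integral
  have hbot : ∫⁻ η in Ioo (0:ℝ) 1, ENNReal.ofReal (C * (η⁻¹ - 1)) = ⊤ := by
    by_contra h
    have hmeas : AEStronglyMeasurable (fun η : ℝ => C * (η⁻¹ - 1))
        (volume.restrict (Ioo (0:ℝ) 1)) :=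
      (((measurable_id.inv).sub measurable_const).const_mul C).aestronglyMeasurable
    have hnn : 0 ≤ᵐ[volume.restrict (Ioo (0:ℝ) 1)] fun η : ℝ => C * (η⁻¹ - 1) := by
      filter_upwards [ae_restrict_mem measurableSet_Ioo] with η hη
      have h1 : (1:ℝ) ≤ η⁻¹ := one_le_inv_iff₀.mpr ⟨hη.1, hη.2.le⟩
      simp only [Pi.zero_apply]
      nlinarith
    have hint : Integrable (fun η : ℝ => C * (η⁻¹ - 1))
        (volume.restrict (Ioo (0:ℝ) 1)) :=
      (lintegral_ofReal_ne_top_iff_integrable hmeas hnn).mp h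
    have hint2 : Integrable (fun η : ℝ => η⁻¹ - 1) (volume.restrict (Ioo (0:ℝ) 1)) := by
      have := hint.const_mul C⁻¹
      simpa [← mul_assoc, inv_mul_cancel₀ hCpos.ne'] using this
    have hint3 : IntegrableOn (fun η : ℝ => η⁻¹) (Ioo (0:ℝ) 1) := by
      have h5 := hint2.add (integrable_const 1)
      exact h5.congr (ae_of_all _ fun η => by simp)
    have hint4 : IntegrableOn (fun η : ℝ => η ^ (-1:ℝ)) (Ioo (0:ℝ) 1) := by
      apply hint3.congr_fun _ measurableSet_Ioo
      intro η hη
      simp [Real.rpow_neg_one]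
    have := (intervalIntegral.integrableOn_Ioo_rpow_iff one_pos).mp hint4
    linarith
  rw [eq_top_iff, ← hbot]
  refine lintegral_mono_ae ?_
  filter_upwards [ae_restrict_mem measurableSet_Ioo] with η hη
  exact ENNReal.ofReal_le_ofReal (key η hη)
end

section
/- For q, r, v, σ > 0 and q - c > 0, the Feller quantity Σ(∞) = ∫₁^∞ [∫₁^ξ m(η) dη] S'(ξ) dξ is infinite, where S' and m are the scale and speed densities of the diffusion with drift b(z) = (q - r z^v - c + σ²) z and diffusion a(z) = σ² z². In particular Σ(∞) ≥ (1/(2(q-c))) ∫₁^∞ (1 - ξ^(-2(q-c)/σ²)) dξ = ∞. -/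
open Real Set MeasureTheory

lemma lintegral_inv_Ioi_two_top : ∫⁻ x in Ioi (2:ℝ), ENNReal.ofReal x⁻¹ = ⊤ := by
  by_contra h
  have hmeas : AEStronglyMeasurable (fun x : ℝ => x⁻¹) (volume.restrict (Ioi (2:ℝ))) :=
    measurable_inv.aestronglyMeasurable
  have hpos : 0 ≤ᵐ[volume.restrict (Ioi (2:ℝ))] fun x : ℝ => x⁻¹ := by
    filter_upwards [ae_restrict_mem measurableSet_Ioi] with x hx
    exact inv_nonneg.2 (le_of_lt (lt_trans two_pos hx))
  have hint : Integrable (fun x : ℝ => x⁻¹) (volume.restrict (Ioi (2:ℝ))) :=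
    (lintegral_ofReal_ne_top_iff_integrable hmeas hpos).1 h
  exact not_IntegrableOn_Ioi_inv hint

theorem feller_sigma_infinity_infinite (q r v c σ : ℝ)
    (hq : 0 < q) (hr : 0 < r) (hv : 0 < v) (hσ : 0 < σ) (hqc : 0 < q - c)
    (S' m : ℝ → ℝ)
    (hS' : ∀ ξ : ℝ, 0 < ξ →
      S' ξ = Real.exp (-(2 * ∫ z in (1:ℝ)..ξ, (q - r * z ^ v - c + σ ^ 2) / (σ ^ 2 * z))))
    (hm : ∀ η : ℝ, 0 < η →
      m η = (σ * η) ^ (-2 : ℝ) *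
        Real.exp (2 * ∫ z in (1:ℝ)..η, (q - r * z ^ v - c + σ ^ 2) / (σ ^ 2 * z))) :
    ∫⁻ ξ in Ioi (1:ℝ), ENNReal.ofReal ((∫ η in (1:ℝ)..ξ, m η) * S' ξ) = ⊤ := by
  have hσ2 : (0:ℝ) < σ ^ 2 := by positivity
  set g : ℝ → ℝ := fun z => (q - r * z ^ v - c + σ ^ 2) / (σ ^ 2 * z) with hgdef
  set k : ℝ := (q - c + σ ^ 2) / σ ^ 2 with hkdef
  have hk1 : 1 < k := by
    rw [hkdef, lt_div_iff₀ hσ2]; linarith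
  -- continuity of g on positive reals
  have hgcont : ContinuousOn g (Ioi 0) := by
    intro z hz
    have hz0 : z ≠ 0 := ne_of_gt hz
    have h1 : ContinuousAt (fun z : ℝ => z ^ v) z :=
      Real.continuousAt_rpow_const z v (Or.inl hz0)
    have : ContinuousAt g z := by
      apply ContinuousAt.div
      · exact ((continuousAt_const.sub (continuousAt_const.mul h1)).sub
          continuousAt_const).add continuousAt_const
      · exact continuousAt_const.mul continuousAt_id
      · exact mul_ne_zero (ne_of_gt hσ2) hz0
    exact this.continuousWithinAt
  have hsub : ∀ a b : ℝ, 1 ≤ a → 1 ≤ b → Set.uIcc a b ⊆ Ioi (0:ℝ) := by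
    intro a b ha hb z hz
    exact lt_of_lt_of_le zero_lt_one ((le_inf ha hb).trans hz.1)
  have hgint : ∀ a b : ℝ, 1 ≤ a → 1 ≤ b → IntervalIntegrable g volume a b := by
    intro a b ha hb
    exact (hgcont.mono (hsub a b ha hb)).intervalIntegrable
  -- difference of primitives bound
  have hFdiff : ∀ η ξ : ℝ, 1 ≤ η → η ≤ ξ →
      (∫ z in (1:ℝ)..ξ, g z) - (∫ z in (1:ℝ)..η, g z) ≤ k * (Real.log ξ - Real.log η) := by
    intro η ξ hη hηξ
    have hξ : (1:ℝ) ≤ ξ := hη.trans hηξ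
    have hη0 : (0:ℝ) < η := lt_of_lt_of_le zero_lt_one hη
    have hξ0 : (0:ℝ) < ξ := lt_of_lt_of_le zero_lt_one hξ
    have hsub' : (∫ z in (1:ℝ)..ξ, g z) - (∫ z in (1:ℝ)..η, g z) = ∫ z in η..ξ, g z :=
      intervalIntegral.integral_interval_sub_left (hgint 1 ξ le_rfl hξ) (hgint 1 η le_rfl hη)
    have hkint : IntervalIntegrable (fun z : ℝ => k * (1 / z)) volume η ξ := by
      apply ContinuousOn.intervalIntegrable
      apply (continuousOn_const.mul (continuousOn_const.div continuousOn_id ?_)).mono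
        (hsub η ξ hη (hη.trans hηξ))
      intro z hz; exact ne_of_gt hz
    have hmono : (∫ z in η..ξ, g z) ≤ ∫ z in η..ξ, k * (1 / z) := by
      apply intervalIntegral.integral_mono_on hηξ (hgint η ξ hη (hη.trans hηξ)) hkint
      intro z hz
      have hz0 : (0:ℝ) < z := lt_of_lt_of_le zero_lt_one (hη.trans hz.1)
      have hzv : (0:ℝ) < z ^ v := Real.rpow_pos_of_pos hz0 v
      have hden : (0:ℝ) < σ ^ 2 * z := by positivity
      have heq : k * (1 / z) = (q - c + σ ^ 2) / (σ ^ 2 * z) := by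
        rw [hkdef]; field_simp
      rw [heq]
      simp only [hgdef]
      exact (div_le_div_iff_of_pos_right hden).2 (by nlinarith [mul_pos hr hzv])
    have hval : (∫ z in η..ξ, k * (1 / z)) = k * (Real.log ξ - Real.log η) := by
      rw [intervalIntegral.integral_const_mul, integral_one_div
        (fun h => absurd ((le_inf hη (hη.trans hηξ)).trans h.1) (by norm_num)),
        Real.log_div (ne_of_gt hξ0) (ne_of_gt hη0)]
    calc (∫ z in (1:ℝ)..ξ, g z) - (∫ z in (1:ℝ)..η, g z) = ∫ z in η..ξ, g z := hsub'
      _ ≤ ∫ z in η..ξ, k * (1 / z) := hmono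
      _ = k * (Real.log ξ - Real.log η) := hval
  -- pointwise lower bound for m η * S' ξ
  have key : ∀ ξ : ℝ, 1 ≤ ξ → ∀ η ∈ Icc (1:ℝ) ξ,
      σ ^ (-2:ℝ) * ξ ^ (-(2*k)) * η ^ (2*k-2) ≤ m η * S' ξ := by
    intro ξ hξ η hη
    have hη1 : (1:ℝ) ≤ η := hη.1
    have hη0 : (0:ℝ) < η := lt_of_lt_of_le zero_lt_one hη1
    have hξ0 : (0:ℝ) < ξ := lt_of_lt_of_le zero_lt_one hξ
    have e1 : Real.exp (-(2*k*(Real.log ξ - Real.log η))) = η ^ (2*k) * ξ ^ (-(2*k)) := by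
      rw [Real.rpow_def_of_pos hη0, Real.rpow_def_of_pos hξ0, ← Real.exp_add]
      ring_nf
    have e2 : σ ^ (-2:ℝ) * ξ ^ (-(2*k)) * η ^ (2*k-2)
        = (σ*η) ^ (-2:ℝ) * (η ^ (2*k) * ξ ^ (-(2*k))) := by
      rw [Real.mul_rpow hσ.le hη0.le,
        show (2*k-2 : ℝ) = -2 + 2*k by ring, Real.rpow_add hη0]
      ring
    calc σ ^ (-2:ℝ) * ξ ^ (-(2*k)) * η ^ (2*k-2)
        = (σ*η) ^ (-2:ℝ) * Real.exp (-(2*k*(Real.log ξ - Real.log η))) := by rw [e2, e1]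
      _ ≤ (σ*η) ^ (-2:ℝ) * (Real.exp (2 * ∫ z in (1:ℝ)..η, g z) *
            Real.exp (-(2 * ∫ z in (1:ℝ)..ξ, g z))) := by
          rw [← Real.exp_add]
          refine mul_le_mul_of_nonneg_left ?_ (Real.rpow_nonneg (by positivity) _)
          exact Real.exp_le_exp.2 (by nlinarith [hFdiff η ξ hη1 hη.2])
      _ = m η * S' ξ := by rw [hm η hη0, hS' ξ hξ0]; ring
  -- continuity / integrability of m on [1, ξ]
  have hmint : ∀ ξ : ℝ, 1 ≤ ξ → IntervalIntegrable m volume 1 ξ := by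
    intro ξ hξ
    apply ContinuousOn.intervalIntegrable
    have hI : Set.uIcc (1:ℝ) ξ = Icc 1 ξ := Set.uIcc_of_le hξ
    have hprim : ContinuousOn (fun x => ∫ z in (1:ℝ)..x, g z) (Set.uIcc (1:ℝ) ξ) :=
      intervalIntegral.continuousOn_primitive_interval' (hgint 1 ξ le_rfl hξ) Set.left_mem_uIcc
    have hcont : ContinuousOn
        (fun η : ℝ => (σ * η) ^ (-2:ℝ) * Real.exp (2 * ∫ z in (1:ℝ)..η, g z))
        (Set.uIcc (1:ℝ) ξ) := by
      apply ContinuousOn.mul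
      · apply ContinuousOn.rpow_const (continuousOn_const.mul continuousOn_id)
        intro x hx
        rw [hI] at hx
        exact Or.inl (mul_pos hσ (lt_of_lt_of_le zero_lt_one hx.1)).ne'
      · exact (continuousOn_const.mul hprim).rexp
    apply hcont.congr
    intro x hx
    rw [hI] at hx
    exact hm x (lt_of_lt_of_le zero_lt_one hx.1)
  -- main lower bound for the product, for ξ ≥ 2
  have hconst : (0:ℝ) < (1 - 2 ^ (1-2*k)) / (σ ^ 2 * (2*k-1)) := by
    apply div_pos
    · have : (2:ℝ) ^ (1-2*k) < 2 ^ (0:ℝ) :=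
        Real.rpow_lt_rpow_of_exponent_lt one_lt_two (by linarith)
      rw [Real.rpow_zero] at this
      linarith
    · exact mul_pos hσ2 (by linarith)
  set c₀ : ℝ := (1 - 2 ^ (1-2*k)) / (σ ^ 2 * (2*k-1)) with hc₀
  have hbound : ∀ ξ : ℝ, ξ ∈ Ioi (2:ℝ) → c₀ * ξ⁻¹ ≤ (∫ η in (1:ℝ)..ξ, m η) * S' ξ := by
    intro ξ hξ2
    have hξ2' : (2:ℝ) < ξ := hξ2
    have hξ : (1:ℝ) ≤ ξ := by linarith
    have hξ0 : (0:ℝ) < ξ := by linarith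
    have hSpos : 0 < S' ξ := by rw [hS' ξ hξ0]; exact Real.exp_pos _
    -- rewrite product as integral of m η * S' ξ
    have h1 : (∫ η in (1:ℝ)..ξ, m η) * S' ξ = ∫ η in (1:ℝ)..ξ, m η * S' ξ :=
      (intervalIntegral.integral_mul_const _ _).symm
    have hRint : IntervalIntegrable
        (fun η : ℝ => σ ^ (-2:ℝ) * ξ ^ (-(2*k)) * η ^ (2*k-2)) volume 1 ξ := by
      apply ContinuousOn.intervalIntegrable
      apply ContinuousOn.mul continuousOn_const
      apply ContinuousOn.rpow_const continuousOn_id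
      intro x hx
      exact Or.inl (ne_of_gt (lt_of_lt_of_le zero_lt_one ((le_inf le_rfl hξ).trans hx.1)))
    have h2 : (∫ η in (1:ℝ)..ξ, σ ^ (-2:ℝ) * ξ ^ (-(2*k)) * η ^ (2*k-2))
        ≤ ∫ η in (1:ℝ)..ξ, m η * S' ξ := by
      apply intervalIntegral.integral_mono_on hξ hRint ((hmint ξ hξ).mul_const _)
      exact key ξ hξ
    have h3 : (∫ η in (1:ℝ)..ξ, σ ^ (-2:ℝ) * ξ ^ (-(2*k)) * η ^ (2*k-2))
        = σ ^ (-2:ℝ) * ξ ^ (-(2*k)) * ((ξ ^ (2*k-1) - 1) / (2*k-1)) := by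
      rw [intervalIntegral.integral_const_mul, integral_rpow (Or.inl (by linarith)),
        show (2*k-2 : ℝ) + 1 = 2*k-1 by ring, Real.one_rpow]
    -- final arithmetic lower bound
    have h4 : c₀ * ξ⁻¹ ≤ σ ^ (-2:ℝ) * ξ ^ (-(2*k)) * ((ξ ^ (2*k-1) - 1) / (2*k-1)) := by
      have hσ2r : σ ^ (-2:ℝ) = (σ ^ 2)⁻¹ := by
        rw [Real.rpow_neg hσ.le, show (2:ℝ) = ((2:ℕ):ℝ) by norm_num, Real.rpow_natCast]
      have hxa : ξ ^ (-(2*k)) * ξ ^ (2*k-1) = ξ⁻¹ := by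
        rw [← Real.rpow_add hξ0, show -(2*k) + (2*k-1) = (-1:ℝ) by ring,
          Real.rpow_neg_one]
      have hxb : ξ ^ (-(2*k)) = ξ ^ (1-2*k) * ξ⁻¹ := by
        rw [← Real.rpow_neg_one ξ, ← Real.rpow_add hξ0,
          show (1-2*k) + (-1:ℝ) = -(2*k) by ring]
      have hxc : ξ ^ (1-2*k) ≤ (2:ℝ) ^ (1-2*k) :=
        Real.rpow_le_rpow_of_nonpos two_pos hξ2'.le (by linarith)
      have h2k : (2*k-1:ℝ) ≠ 0 := by linarith
      have hden2 : (0:ℝ) < σ ^ 2 * (2*k-1) := mul_pos hσ2 (by linarith)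
      have hrw : σ ^ (-2:ℝ) * ξ ^ (-(2*k)) * ((ξ ^ (2*k-1) - 1) / (2*k-1))
          = (ξ⁻¹ - ξ ^ (1-2*k) * ξ⁻¹) / (σ ^ 2 * (2*k-1)) := by
        have step : σ ^ (-2:ℝ) * ξ ^ (-(2*k)) * ((ξ ^ (2*k-1) - 1) / (2*k-1))
            = (ξ ^ (-(2*k)) * ξ ^ (2*k-1) - ξ ^ (-(2*k))) / (σ ^ 2 * (2*k-1)) := by
          rw [hσ2r]
          field_simp
        rw [step, hxa, hxb]
      rw [hrw, hc₀, div_mul_eq_mul_div, div_le_div_iff₀ hden2 hden2]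
      have hξinv : (0:ℝ) ≤ ξ⁻¹ := by positivity
      have : ξ ^ (1-2*k) * ξ⁻¹ ≤ (2:ℝ) ^ (1-2*k) * ξ⁻¹ :=
        mul_le_mul_of_nonneg_right hxc hξinv
      nlinarith [mul_pos hσ2 (show (0:ℝ) < 2*k-1 by linarith)]
    calc c₀ * ξ⁻¹ ≤ σ ^ (-2:ℝ) * ξ ^ (-(2*k)) * ((ξ ^ (2*k-1) - 1) / (2*k-1)) := h4
      _ = ∫ η in (1:ℝ)..ξ, σ ^ (-2:ℝ) * ξ ^ (-(2*k)) * η ^ (2*k-2) := h3.symm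
      _ ≤ ∫ η in (1:ℝ)..ξ, m η * S' ξ := h2
      _ = (∫ η in (1:ℝ)..ξ, m η) * S' ξ := h1.symm
  -- conclude
  rw [eq_top_iff]
  calc (⊤ : ENNReal) = ENNReal.ofReal c₀ * ⊤ :=
        (ENNReal.mul_top (ENNReal.ofReal_pos.2 hconst).ne').symm
    _ = ENNReal.ofReal c₀ * ∫⁻ x in Ioi (2:ℝ), ENNReal.ofReal x⁻¹ := by
        rw [lintegral_inv_Ioi_two_top]
    _ = ∫⁻ x in Ioi (2:ℝ), ENNReal.ofReal c₀ * ENNReal.ofReal x⁻¹ :=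
        (lintegral_const_mul' _ _ ENNReal.ofReal_ne_top).symm
    _ = ∫⁻ ξ in Ioi (2:ℝ), ENNReal.ofReal (c₀ * ξ⁻¹) := by
        simp_rw [← ENNReal.ofReal_mul hconst.le]
    _ ≤ ∫⁻ ξ in Ioi (2:ℝ), ENNReal.ofReal ((∫ η in (1:ℝ)..ξ, m η) * S' ξ) := by
        apply setLIntegral_mono' measurableSet_Ioi
        intro ξ hξ
        exact ENNReal.ofReal_le_ofReal (hbound ξ hξ)
    _ ≤ ∫⁻ ξ in Ioi (1:ℝ), ENNReal.ofReal ((∫ η in (1:ℝ)..ξ, m η) * S' ξ) :=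
        lintegral_mono_set (Ioi_subset_Ioi one_le_two)
end
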